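/- Assume that for each state s ∈ S there is a path of non-zero probability starting in s that contains a symbol from Σ. Then for every start state s₀ ∈ S and every n ∈ ℕ, the probabilities of all sequences in the sample space sum to one: ∑_{z̃ ∈ Ωⁿ_{s₀}} Pⁿ_{s₀}(z̃) = 1. -/

import Mathlib

open scoped ENNReal

/-- A Hidden Markov Model with ε-transitions: a finite state space `S`, a finite
alphabet `A`, and for each state a probability function on `(Σ ∪ {ε}) × S`,
where `ε` is modelled by `none`. -/
structure HMMeps (S A : Type*) [Fintype S] [Fintype A] where
  δ : S → Option A × S → ℝ≥0∞
  sum_one : ∀ s : S, ∑ p : Option A × S, δ s p = 1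

namespace HMMeps

variable {S A : Type*} [Fintype S] [Fintype A]

/-- The probability of an alternating sequence `s₀ a₁ s₁ … a_m s_m`, represented by
its start state `s₀` together with the list of steps `[(a₁,s₁),…,(a_m,s_m)]`:
the product of the transition probabilities. -/
noncomputable def pathProb (M : HMMeps S A) : S → List (Option A × S) → ℝ≥0∞
  | _, [] => 1
  | s, p :: rest => M.δ s p * M.pathProb p.2 rest

/-- The observable projection `Y`: the sequence of observable symbols
(ε's and states removed). -/
def obsSeq (z : List (Option A × S)) : List A := z.filterMap Prod.fst

/-- The last state `L` of a sequence starting in `s₀`. -/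
def lastState (s₀ : S) (z : List (Option A × S)) : S :=
  (z.getLast?.map Prod.snd).getD s₀

/-- The sample space `Ωⁿ_{s₀} = s₀((εS)*ΣS)ⁿ`: alternating sequences containing
exactly `n` observable symbols whose second-to-last element (i.e. the symbol of the
last transition) is observable.  (The start state is kept separately, so an element
of the sample space is just the list of steps.) -/
def Omega (S A : Type*) (n : ℕ) : Set (List (Option A × S)) :=
  {z | (obsSeq z).length = n ∧ ∀ p ∈ z.getLast?, (Prod.fst p).isSome = true}

end HMMeps

namespace HMMeps
set_option linter.unusedSectionVars false
variable {S A : Type*} [Fintype S] [Fintype A]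

variable (M : HMMeps S A)

lemma delta_le_one (s : S) (p : Option A × S) : M.δ s p ≤ 1 := by
  rw [← M.sum_one s]
  exact Finset.single_le_sum (fun _ _ => zero_le) (Finset.mem_univ p)

@[simp] lemma pathProb_nil (s : S) : M.pathProb s [] = 1 := rfl

lemma pathProb_cons (s : S) (p : Option A × S) (rest : List (Option A × S)) :
    M.pathProb s (p :: rest) = M.δ s p * M.pathProb p.2 rest := rfl

lemma pathProb_le_one (s : S) (z : List (Option A × S)) : M.pathProb s z ≤ 1 := by
  induction z generalizing s with
  | nil => simp
  | cons p rest ih =>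
    rw [pathProb_cons]
    calc M.δ s p * M.pathProb p.2 rest ≤ 1 * 1 :=
      mul_le_mul' (M.delta_le_one s p) (ih p.2)
    _ = 1 := one_mul 1

@[simp] lemma lastState_nil (s : S) : lastState s ([] : List (Option A × S)) = s := rfl

lemma lastState_cons (s : S) (p : Option A × S) (rest : List (Option A × S)) :
    lastState s (p :: rest) = lastState p.2 rest := by
  cases rest with
  | nil => simp [lastState]
  | cons q t =>
    simp only [lastState, List.getLast?_cons_cons]
    induction t generalizing q with
    | nil => rfl
    | cons r t' ih => rw [List.getLast?_cons_cons]; exact ih r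

lemma pathProb_append (s : S) (z₁ z₂ : List (Option A × S)) :
    M.pathProb s (z₁ ++ z₂) = M.pathProb s z₁ * M.pathProb (lastState s z₁) z₂ := by
  induction z₁ generalizing s with
  | nil => simp
  | cons p rest ih =>
    rw [List.cons_append, pathProb_cons, pathProb_cons, ih, lastState_cons, mul_assoc]


/-- probability of `k` consecutive ε-steps starting from `s`. -/
noncomputable def epsP (M : HMMeps S A) : ℕ → S → ℝ≥0∞
  | 0, _ => 1
  | (k+1), s => ∑ t : S, M.δ s (none, t) * M.epsP k t

/-- probability of `k` ε-steps followed by one observable step. -/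
noncomputable def uP (M : HMMeps S A) : ℕ → S → ℝ≥0∞
  | 0, s => ∑ q : A × S, M.δ s (some q.1, q.2)
  | (k+1), s => ∑ t : S, M.δ s (none, t) * M.uP k t

lemma sum_split (f : Option A × S → ℝ≥0∞) :
    ∑ p : Option A × S, f p = (∑ t : S, f (none, t)) + ∑ q : A × S, f (some q.1, q.2) := by
  rw [Fintype.sum_prod_type, Fintype.sum_option, Fintype.sum_prod_type]

lemma uP_add_epsP (k : ℕ) (s : S) : M.uP k s + M.epsP (k + 1) s = M.epsP k s := by
  induction k generalizing s with
  | zero =>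
    have := M.sum_one s
    rw [sum_split] at this
    simp only [uP, epsP]
    rw [add_comm]
    simpa [mul_one] using this
  | succ k ih =>
    have h1 : M.uP (k+1) s = ∑ t : S, M.δ s (none, t) * M.uP k t := rfl
    have h2 : M.epsP (k+1+1) s = ∑ t : S, M.δ s (none, t) * M.epsP (k+1) t := rfl
    have h3 : M.epsP (k+1) s = ∑ t : S, M.δ s (none, t) * M.epsP k t := rfl
    rw [h1, h2, h3, ← Finset.sum_add_distrib]
    exact Finset.sum_congr rfl fun t _ => by rw [← mul_add, ih t]

lemma sum_uP_add_epsP (m : ℕ) (s : S) :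
    (∑ k ∈ Finset.range m, M.uP k s) + M.epsP m s = 1 := by
  induction m with
  | zero => simp [epsP]
  | succ m ih =>
    rw [Finset.sum_range_succ, add_assoc, M.uP_add_epsP m s, ih]

lemma epsP_le_one (m : ℕ) (s : S) : M.epsP m s ≤ 1 := by
  conv_rhs => rw [← M.sum_uP_add_epsP m s]
  exact le_add_self

lemma epsP_antitone (s : S) : Antitone fun m => M.epsP m s := by
  apply antitone_nat_of_succ_le
  intro m
  conv_rhs => rw [← M.uP_add_epsP m s]
  exact le_add_self

/-- if `z` contains an observable step then `pathProb s z + epsP z.length s ≤ 1`. -/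
lemma pathProb_add_epsP_le (z : List (Option A × S)) (s : S)
    (hz : ∃ p ∈ z, (Prod.fst p).isSome = true) :
    M.pathProb s z + M.epsP z.length s ≤ 1 := by
  induction z generalizing s with
  | nil => simp at hz
  | cons p rest ih =>
    rcases p with ⟨o, t0⟩
    cases o with
    | some a =>
      have h1 : M.pathProb s ((some a, t0) :: rest) ≤ M.δ s (some a, t0) := by
        rw [pathProb_cons]
        calc M.δ s (some a, t0) * M.pathProb t0 rest
            ≤ M.δ s (some a, t0) * 1 := mul_le_mul_right (M.pathProb_le_one _ _) _
          _ = _ := mul_one _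
      have h2 : M.epsP (((some a, t0) :: rest)).length s ≤ ∑ t : S, M.δ s (none, t) := by
        simp only [List.length_cons, epsP]
        exact Finset.sum_le_sum fun t _ =>
          (mul_le_mul_right (M.epsP_le_one _ _) _).trans (mul_one _).le
      calc M.pathProb s ((some a, t0) :: rest) + M.epsP (((some a, t0) :: rest)).length s
          ≤ M.δ s (some a, t0) + ∑ t : S, M.δ s (none, t) := add_le_add h1 h2
        _ ≤ (∑ q : A × S, M.δ s (some q.1, q.2)) + ∑ t : S, M.δ s (none, t) := by
            refine add_le_add_left ?_ _
            exact Finset.single_le_sum (f := fun q : A × S => M.δ s (some q.1, q.2))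
              (fun _ _ => zero_le) (Finset.mem_univ (a, t0))
        _ = 1 := by rw [add_comm, ← sum_split]; exact M.sum_one s
    | none =>
      have hrest : ∃ p ∈ rest, (Prod.fst p).isSome = true := by
        rcases hz with ⟨p, hp, hps⟩
        rcases List.mem_cons.mp hp with h | h
        · subst h; simp at hps
        · exact ⟨p, h, hps⟩
      have key : M.δ s (none, t0) * M.pathProb t0 rest
            + ∑ t : S, M.δ s (none, t) * M.epsP rest.length t
            ≤ ∑ t : S, M.δ s (none, t) := by
        classical
        rw [← Finset.add_sum_erase _ _ (Finset.mem_univ t0), ← add_assoc, ← mul_add]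
        rw [← Finset.add_sum_erase (f := fun t => M.δ s (none, t)) _ (Finset.mem_univ t0)]
        refine add_le_add ?_ (Finset.sum_le_sum fun t _ =>
          (mul_le_mul_right (M.epsP_le_one _ _) _).trans (mul_one _).le)
        calc M.δ s (none, t0) * (M.pathProb t0 rest + M.epsP rest.length t0)
            ≤ M.δ s (none, t0) * 1 := mul_le_mul_right (ih t0 hrest) _
          _ = _ := mul_one _
      calc M.pathProb s ((none, t0) :: rest) + M.epsP (((none, t0) :: rest)).length s
          = M.δ s (none, t0) * M.pathProb t0 rest
            + ∑ t : S, M.δ s (none, t) * M.epsP rest.length t := by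
            rw [pathProb_cons]; rfl
        _ ≤ ∑ t : S, M.δ s (none, t) := key
        _ ≤ ∑ p : Option A × S, M.δ s p := by
            rw [sum_split]; exact self_le_add_right _ _
        _ = 1 := M.sum_one s

lemma exists_epsP_lt_one
    (hreach : ∀ s : S, ∃ z : List (Option A × S),
      0 < M.pathProb s z ∧ ∃ p ∈ z, (Prod.fst p).isSome = true) (s : S) :
    ∃ m : ℕ, M.epsP m s < 1 := by
  obtain ⟨z, hpos, hobs⟩ := hreach s
  refine ⟨z.length, ?_⟩
  have hb := M.pathProb_add_epsP_le z s hobs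
  have hne : M.epsP z.length s ≠ ∞ :=
    ne_top_of_le_ne_top (by simp) (M.epsP_le_one _ _)
  calc M.epsP z.length s < M.epsP z.length s + M.pathProb s z :=
        ENNReal.lt_add_right hne hpos.ne'
    _ = M.pathProb s z + M.epsP z.length s := add_comm _ _
    _ ≤ 1 := hb

lemma epsP_contract {N : ℕ} {c : ℝ≥0∞} (hc : ∀ t : S, M.epsP N t ≤ c) (m : ℕ) (s : S) :
    M.epsP (m + N) s ≤ c * M.epsP m s := by
  induction m generalizing s with
  | zero => simpa [epsP] using hc s
  | succ m ih =>
    have h1 : M.epsP (m + 1 + N) s = ∑ t : S, M.δ s (none, t) * M.epsP (m + N) t := by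
      rw [show m + 1 + N = (m + N) + 1 by omega]; rfl
    have h2 : M.epsP (m + 1) s = ∑ t : S, M.δ s (none, t) * M.epsP m t := rfl
    rw [h1, h2, Finset.mul_sum]
    refine Finset.sum_le_sum fun t _ => ?_
    calc M.δ s (none, t) * M.epsP (m + N) t ≤ M.δ s (none, t) * (c * M.epsP m t) :=
        mul_le_mul_right (ih t) _
      _ = c * (M.δ s (none, t) * M.epsP m t) := by ring

lemma tsum_uP_eq_one
    (hreach : ∀ s : S, ∃ z : List (Option A × S),
      0 < M.pathProb s z ∧ ∃ p ∈ z, (Prod.fst p).isSome = true) (s : S) :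
    ∑' k : ℕ, M.uP k s = 1 := by
  classical
  choose m hm using fun t => M.exists_epsP_lt_one hreach t
  set N : ℕ := Finset.univ.sup m with hN
  set c : ℝ≥0∞ := Finset.univ.sup (fun t => M.epsP N t) with hcdef
  have hcN : ∀ t : S, M.epsP N t ≤ c := fun t =>
    Finset.le_sup (Finset.mem_univ t)
  have hc1 : c < 1 := by
    rw [hcdef]
    refine Finset.sup_lt_iff (by simp) |>.mpr fun t _ => ?_
    exact lt_of_le_of_lt (M.epsP_antitone t (Finset.le_sup (Finset.mem_univ t))) (hm t)
  have hpow : ∀ j : ℕ, ∀ t : S, M.epsP (j * N) t ≤ c ^ j := by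
    intro j
    induction j with
    | zero => intro t; simp [epsP]
    | succ j ih =>
      intro t
      have : (j + 1) * N = j * N + N := by ring
      rw [this, pow_succ]
      calc M.epsP (j * N + N) t ≤ c * M.epsP (j * N) t := M.epsP_contract hcN _ t
        _ ≤ c * c ^ j := mul_le_mul_right (ih t) _
        _ = c ^ j * c := mul_comm _ _
  have hpartial : ∀ k : ℕ, ∑ i ∈ Finset.range k, M.uP i s = 1 - M.epsP k s := fun k =>
    ENNReal.eq_sub_of_add_eq (ne_top_of_le_ne_top (by simp) (M.epsP_le_one _ _))
      (M.sum_uP_add_epsP k s)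
  rw [ENNReal.tsum_eq_iSup_nat]
  apply le_antisymm
  · exact iSup_le fun k => by rw [hpartial k]; exact tsub_le_self.trans le_rfl
  · have hub : ∀ j : ℕ, (1 : ℝ≥0∞) ≤ (⨆ k, ∑ i ∈ Finset.range k, M.uP i s) + c ^ j := by
      intro j
      rw [← tsub_le_iff_right]
      calc (1 : ℝ≥0∞) - c ^ j ≤ 1 - M.epsP (j * N) s := tsub_le_tsub_left (hpow j s) 1
        _ = ∑ i ∈ Finset.range (j * N), M.uP i s := (hpartial _).symm
        _ ≤ ⨆ k, ∑ i ∈ Finset.range k, M.uP i s := le_iSup (fun k => ∑ i ∈ Finset.range k, M.uP i s) (j * N)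
    have htend : Filter.Tendsto (fun j : ℕ => (⨆ k, ∑ i ∈ Finset.range k, M.uP i s) + c ^ j)
        Filter.atTop (nhds ((⨆ k, ∑ i ∈ Finset.range k, M.uP i s) + 0)) :=
      Filter.Tendsto.const_add _ (ENNReal.tendsto_pow_atTop_nhds_zero_of_lt_one hc1)
    have := ge_of_tendsto' htend hub
    rwa [add_zero] at this

/-- the list of steps of one block: ε-states `l` then observable step `q`. -/
def blockList (b : List S × (A × S)) : List (Option A × S) :=
  (b.1.map fun t => ((none : Option A), t)) ++ [(some b.2.1, b.2.2)]

lemma blockList_cons (x : S) (l : List S) (q : A × S) :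
    blockList (x :: l, q) = ((none : Option A), x) :: blockList (l, q) := rfl

lemma lastState_blockList (s : S) (b : List S × (A × S)) :
    lastState s (blockList b) = b.2.2 := by
  simp [lastState, blockList, List.getLast?_append_of_ne_nil]

lemma obsSeq_blockList (b : List S × (A × S)) : obsSeq (blockList b) = [b.2.1] := by
  simp [obsSeq, blockList, List.filterMap_append, List.filterMap_map]

/-- the per-length block sums are the `uP`s. -/
lemma sum_block (k : ℕ) (s : S) :
    ∑ v : Fin k → S, ∑ q : A × S, M.pathProb s (blockList (List.ofFn v, q)) = M.uP k s := by
  induction k generalizing s with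
  | zero =>
    rw [show M.uP 0 s = ∑ q : A × S, M.δ s (some q.1, q.2) from rfl]
    rw [Fintype.sum_unique]
    refine Finset.sum_congr rfl fun q _ => ?_
    simp [blockList, pathProb]
  | succ k ih =>
    rw [show M.uP (k+1) s = ∑ t : S, M.δ s (none, t) * M.uP k t from rfl]
    rw [← Equiv.sum_comp (Fin.consEquiv (fun _ : Fin (k+1) => S))
      (fun v => ∑ q : A × S, M.pathProb s (blockList (List.ofFn v, q)))]
    rw [Fintype.sum_prod_type]
    refine Finset.sum_congr rfl fun t _ => ?_
    rw [← ih t, Finset.mul_sum]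
    refine Finset.sum_congr rfl fun v _ => ?_
    have hofn : List.ofFn ((Fin.consEquiv (fun _ : Fin (k+1) => S)) (t, v)) = t :: List.ofFn v := by
      simp [Fin.consEquiv, List.ofFn_succ]
    rw [hofn, Finset.mul_sum]
    refine Finset.sum_congr rfl fun q _ => ?_
    rw [blockList_cons, pathProb_cons]

/-- lists are a sigma type of tuples. -/
noncomputable def listEquiv (S : Type*) : (Σ k : ℕ, Fin k → S) ≃ List S :=
  Equiv.ofBijective (fun x => List.ofFn x.2) (by
    constructor
    · rintro ⟨k₁, v₁⟩ ⟨k₂, v₂⟩ h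
      have hk : k₁ = k₂ := by
        have := congrArg List.length h
        simpa using this
      subst hk
      exact congrArg (Sigma.mk k₁) (List.ofFn_injective h)
    · intro l
      exact ⟨⟨l.length, l.get⟩, List.ofFn_get l⟩)

lemma tsum_blocks (s : S) : ∑' b : List S × (A × S), M.pathProb s (blockList b)
    = ∑' k : ℕ, M.uP k s := by
  calc ∑' b : List S × (A × S), M.pathProb s (blockList b)
      = ∑' (l : List S) (q : A × S), M.pathProb s (blockList (l, q)) := ENNReal.tsum_prod'
    _ = ∑' (x : Σ k : ℕ, Fin k → S) (q : A × S),
          M.pathProb s (blockList (List.ofFn x.2, q)) :=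
        (Equiv.tsum_eq (listEquiv S)
          (fun l => ∑' q : A × S, M.pathProb s (blockList (l, q)))).symm
    _ = ∑' (k : ℕ) (v : Fin k → S) (q : A × S),
          M.pathProb s (blockList (List.ofFn v, q)) :=
        ENNReal.tsum_sigma (fun k (v : Fin k → S) =>
          ∑' q : A × S, M.pathProb s (blockList (List.ofFn v, q)))
    _ = ∑' k : ℕ, M.uP k s := by
        refine tsum_congr fun k => ?_
        rw [tsum_fintype, ← M.sum_block k s]
        exact Finset.sum_congr rfl fun v _ => tsum_fintype _

lemma blockList_append_mem_Omega {n : ℕ} (b : List S × (A × S))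
    {r : List (Option A × S)} (hr : r ∈ Omega S A n) :
    blockList b ++ r ∈ Omega S A (n + 1) := by
  constructor
  · show (obsSeq (blockList b ++ r)).length = n + 1
    have h1 : obsSeq (blockList b ++ r) = obsSeq (blockList b) ++ obsSeq r := by
      simp [obsSeq, List.filterMap_append]
    rw [h1, obsSeq_blockList, List.length_append, hr.1]
    simp [Nat.add_comm]
  · intro p hp
    cases r with
    | nil =>
      rw [List.append_nil, blockList,
        List.getLast?_append_of_ne_nil _ (by simp)] at hp
      simp only [List.getLast?_singleton, Option.mem_some_iff] at hp
      subst hp; rfl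
    | cons x t =>
      rw [List.getLast?_append_of_ne_nil _ (by simp)] at hp
      exact hr.2 p hp

lemma block_decomp_inj : ∀ (l₁ l₂ : List S) (q₁ q₂ : A × S) (r₁ r₂ : List (Option A × S)),
    blockList (l₁, q₁) ++ r₁ = blockList (l₂, q₂) ++ r₂ →
    l₁ = l₂ ∧ q₁ = q₂ ∧ r₁ = r₂ := by
  intro l₁
  induction l₁ with
  | nil =>
    intro l₂ q₁ q₂ r₁ r₂ h
    cases l₂ with
    | nil =>
      have h' : ((some q₁.1 : Option A), q₁.2) :: r₁ = ((some q₂.1 : Option A), q₂.2) :: r₂ := h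
      injection h' with h1 h2
      injection h1 with ha hb
      exact ⟨rfl, Prod.ext (Option.some.inj ha) hb, h2⟩
    | cons y l₂' =>
      have h' : ((some q₁.1 : Option A), q₁.2) :: r₁
          = ((none : Option A), y) :: (blockList (l₂', q₂) ++ r₂) := h
      injection h' with h1 _
      injection h1 with ha _
      exact absurd ha (by simp)
  | cons x l₁' ih =>
    intro l₂ q₁ q₂ r₁ r₂ h
    cases l₂ with
    | nil =>
      have h' : ((none : Option A), x) :: (blockList (l₁', q₁) ++ r₁)
          = ((some q₂.1 : Option A), q₂.2) :: r₂ := h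
      injection h' with h1 _
      injection h1 with ha _
      exact absurd ha (by simp)
    | cons y l₂' =>
      have h' : ((none : Option A), x) :: (blockList (l₁', q₁) ++ r₁)
          = ((none : Option A), y) :: (blockList (l₂', q₂) ++ r₂) := h
      injection h' with h1 h2
      injection h1 with _ hxy
      obtain ⟨hl, hq, hr⟩ := ih l₂' q₁ q₂ r₁ r₂ h2
      exact ⟨by rw [hxy, hl], hq, hr⟩

lemma block_decomp_surj {n : ℕ} : ∀ z ∈ Omega S A (n + 1),
    ∃ (b : List S × (A × S)) (r : List (Option A × S)),
      r ∈ Omega S A n ∧ z = blockList b ++ r := by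
  intro z
  induction z with
  | nil => intro hz; exact absurd hz.1 (by simp [obsSeq])
  | cons p rest ih =>
    intro hz
    obtain ⟨o, t0⟩ := p
    cases o with
    | some a =>
      refine ⟨([], (a, t0)), rest, ⟨?_, ?_⟩, rfl⟩
      · have h1 := hz.1
        simp only [obsSeq, List.filterMap_cons] at h1 ⊢
        simpa using h1
      · intro p hp
        cases rest with
        | nil => simp at hp
        | cons x t => exact hz.2 p (by rw [List.getLast?_cons_cons]; exact hp)
    | none =>
      have hne : rest ≠ [] := by
        intro h; subst h
        have := hz.2 (none, t0) (by simp [List.getLast?])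
        simp at this
      have hrest : rest ∈ Omega S A (n + 1) := by
        constructor
        · have h1 := hz.1
          simpa only [obsSeq, List.filterMap_cons] using h1
        · intro p hp
          cases rest with
          | nil => exact absurd rfl hne
          | cons x t => exact hz.2 p (by rw [List.getLast?_cons_cons]; exact hp)
      obtain ⟨⟨l, q⟩, r, hr, heq⟩ := ih hrest
      refine ⟨(t0 :: l, q), r, hr, ?_⟩
      rw [blockList_cons, List.cons_append, ← heq]

lemma omega_tsum_aux
    (hreach : ∀ s : S, ∃ z : List (Option A × S),
      0 < M.pathProb s z ∧ ∃ p ∈ z, (Prod.fst p).isSome = true) :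
    ∀ (n : ℕ) (s : S), ∑' z : Omega S A n, M.pathProb s z.1 = 1 := by
  intro n
  induction n with
  | zero =>
    intro s
    have hmem : ([] : List (Option A × S)) ∈ Omega S A 0 := ⟨rfl, by simp⟩
    have huniq : ∀ z ∈ Omega S A 0, z = [] := by
      intro z hz
      cases hzz : z with
      | nil => rfl
      | cons p t =>
        exfalso
        subst hzz
        have hl := List.getLast?_eq_getLast_of_ne_nil (l := p :: t) (by simp)
        have hm := hz.2 _ (by rw [hl]; rfl)
        obtain ⟨a, ha⟩ := Option.isSome_iff_exists.mp hm
        have hobs : a ∈ obsSeq (p :: t) :=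
          List.mem_filterMap.mpr ⟨_, List.getLast_mem _, ha⟩
        have := hz.1
        rw [List.length_eq_zero_iff] at this
        rw [this] at hobs
        exact List.not_mem_nil hobs
    exact (tsum_eq_single (⟨[], hmem⟩ : Omega S A 0)
      fun b hb => absurd (Subtype.ext (huniq b.1 b.2)) hb)
  | succ n ih =>
    intro s
    set Φ : (List S × (A × S)) × (Omega S A n) → (Omega S A (n + 1)) :=
      fun x => ⟨blockList x.1 ++ x.2.1, blockList_append_mem_Omega x.1 x.2.2⟩ with hΦ
    have hbij : Function.Bijective Φ := by
      constructor
      · rintro ⟨⟨l₁, q₁⟩, r₁⟩ ⟨⟨l₂, q₂⟩, r₂⟩ h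
        have h' := congrArg Subtype.val h
        obtain ⟨h1, h2, h3⟩ := block_decomp_inj l₁ l₂ q₁ q₂ r₁.1 r₂.1 h'
        exact Prod.ext (Prod.ext h1 h2) (Subtype.ext h3)
      · rintro ⟨z, hz⟩
        obtain ⟨b, r, hr, heq⟩ := block_decomp_surj z hz
        exact ⟨(b, ⟨r, hr⟩), Subtype.ext heq.symm⟩
    calc ∑' z : Omega S A (n + 1), M.pathProb s z.1
        = ∑' x : (List S × (A × S)) × (Omega S A n), M.pathProb s (Φ x).1 :=
          (Equiv.tsum_eq (Equiv.ofBijective Φ hbij) (fun z => M.pathProb s z.1)).symm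
      _ = ∑' (b : List S × (A × S)) (r : Omega S A n),
            M.pathProb s (blockList b) * M.pathProb b.2.2 r.1 := by
          rw [← ENNReal.tsum_prod'
            (f := fun x : (List S × (A × S)) × (Omega S A n) =>
              M.pathProb s (blockList x.1) * M.pathProb x.1.2.2 x.2.1)]
          refine tsum_congr fun x => ?_
          rw [hΦ]
          show M.pathProb s (blockList x.1 ++ x.2.1) = _
          rw [M.pathProb_append, lastState_blockList]
      _ = ∑' b : List S × (A × S),
            M.pathProb s (blockList b) * ∑' r : Omega S A n, M.pathProb b.2.2 r.1 :=
          tsum_congr fun b => ENNReal.tsum_mul_left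
      _ = ∑' b : List S × (A × S), M.pathProb s (blockList b) := by
          refine tsum_congr fun b => ?_
          rw [ih b.2.2, mul_one]
      _ = ∑' k : ℕ, M.uP k s := M.tsum_blocks s
      _ = 1 := M.tsum_uP_eq_one hreach s


end HMMeps

open HMMeps in
/-- If from every state there is a path of non-zero probability that
contains an observable symbol, then the probability space is well-defined:
for every start state `s₀` and every `n`, `∑_{z̃ ∈ Ωⁿ_{s₀}} Pⁿ_{s₀}(z̃) = 1`. -/
theorem omega_tsum_pathProb_eq_one {S A : Type*} [Fintype S] [Fintype A]
    (M : HMMeps S A)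
    (hreach : ∀ s : S, ∃ z : List (Option A × S),
      0 < M.pathProb s z ∧ ∃ p ∈ z, (Prod.fst p).isSome = true)
    (s₀ : S) (n : ℕ) :
    ∑' z : Omega S A n, M.pathProb s₀ z.1 = 1 :=
  M.omega_tsum_aux hreach n s₀
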